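/- Let $(c_k) \in \ell^2$ with $\gamma^2 = \sum_k |c_k|^2$, let $f = \sum_k c_k r_k$ where $(r_k)$ are the Rademacher functions, and let $\mu > 0$ satisfy $4 e \mu \gamma^2 < 1$. Then $\int_0^1 \exp(\mu |f(x)|^2)\, dx \le \frac{1}{1 - 4e\mu\gamma^2}$. -/

import Mathlib

open Real MeasureTheory Finset

noncomputable def rademacher (k : ℕ) (t : ℝ) : ℝ :=
  Real.sign (Real.sin (2 * π * 2 ^ k * t))

noncomputable def sg (n j k : ℕ) : ℝ := if Nat.testBit j (n-1-k) then -1 else 1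
noncomputable def Zd (c : ℕ → ℂ) (n j : ℕ) : ℂ := ∑ k ∈ range n, c k * (sg n j k : ℂ)

/-- double factorial coefficient: K m = (2m-1)!! -/
def K (m : ℕ) : ℕ := Nat.doubleFactorial (2*m-1)

lemma K_zero : K 0 = 1 := rfl

lemma K_succ (m : ℕ) : K (m+1) = (2*m+1) * K m := by
  have h : 2*(m+1)-1 = 2*m+1 := by omega
  rw [K, h, Nat.doubleFactorial_add_one]
  rfl

lemma fact_eq (m : ℕ) : (2*m).factorial = 2^m * m.factorial * K m := by
  induction m with
  | zero => rfl
  | succ m ih =>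
    have h : 2*(m+1) = (2*m+1)+1 := by omega
    rw [h, Nat.factorial_succ, Nat.factorial_succ, ih, K_succ, Nat.factorial_succ]
    ring

lemma two_pow_fact_le (i : ℕ) : 2^i * i.factorial ≤ (2*i).factorial := by
  rw [← Nat.doubleFactorial_two_mul]
  exact Nat.doubleFactorial_le_factorial _

lemma key (p i : ℕ) :
    Nat.choose (2*(p+i)) (2*i) * K p ≤ K (p+i) * Nat.choose (p+i) i := by
  have h1 : Nat.choose (2*(p+i)) (2*i) * (2*i).factorial * (2*p).factorial
      = (2*(p+i)).factorial := by
    have := Nat.choose_mul_factorial_mul_factorial (show 2*i ≤ 2*(p+i) by omega)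
    simpa [show 2*(p+i) - 2*i = 2*p by omega] using this
  have h2 : Nat.choose (p+i) i * i.factorial * p.factorial = (p+i).factorial := by
    have := Nat.choose_mul_factorial_mul_factorial (show i ≤ p+i by omega)
    simpa [show (p+i) - i = p by omega] using this
  have h3 : 2^i * i.factorial ≤ (2*i).factorial := two_pow_fact_le i
  have ht : 0 < (2*i).factorial * (2*p).factorial * (i.factorial * p.factorial) := by
    positivity
  refine Nat.le_of_mul_le_mul_right ?_ ht
  have h4 : 2^(p+i) * i.factorial ≤ (2*i).factorial * 2^p := by
    rw [pow_add]
    calc 2^p * 2^i * i.factorial = 2^p * (2^i * i.factorial) := by ring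
    _ ≤ 2^p * (2*i).factorial := Nat.mul_le_mul (le_refl _) h3
    _ = (2*i).factorial * 2^p := by ring
  calc Nat.choose (2*(p+i)) (2*i) * K p * ((2*i).factorial * (2*p).factorial * (i.factorial * p.factorial))
      = (Nat.choose (2*(p+i)) (2*i) * (2*i).factorial * (2*p).factorial) * (K p * (i.factorial * p.factorial)) := by ring
    _ = (2*(p+i)).factorial * (K p * (i.factorial * p.factorial)) := by rw [h1]
    _ = (2^(p+i) * (p+i).factorial * K (p+i)) * (K p * (i.factorial * p.factorial)) := by rw [fact_eq]
    _ = (2^(p+i) * i.factorial) * ((p+i).factorial * K (p+i) * (K p * p.factorial)) := by ring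
    _ ≤ ((2*i).factorial * 2^p) * ((p+i).factorial * K (p+i) * (K p * p.factorial)) :=
        Nat.mul_le_mul h4 (le_refl _)
    _ = (p+i).factorial * K (p+i) * (2*i).factorial * (2^p * p.factorial * K p) := by ring
    _ = (p+i).factorial * K (p+i) * (2*i).factorial * (2*p).factorial := by rw [← fact_eq]
    _ = K (p+i) * Nat.choose (p+i) i * ((2*i).factorial * (2*p).factorial * (i.factorial * p.factorial)) := by
        rw [← h2]; ring

lemma fact2_le (m : ℕ) : (2*m).factorial ≤ 4^m * (m.factorial * m.factorial) := by
  induction m with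
  | zero => simp
  | succ m ih =>
    have h : 2*(m+1) = (2*m+1)+1 := by omega
    rw [h, Nat.factorial_succ, Nat.factorial_succ]
    calc (2*m+1+1) * ((2*m+1) * (2*m).factorial)
        ≤ (2*(m+1)) * ((2*(m+1)) * (4^m * (m.factorial * m.factorial))) := by
          refine Nat.mul_le_mul (by omega) (Nat.mul_le_mul (by omega) ih)
      _ = 4^(m+1) * ((m+1) * m.factorial * ((m+1) * m.factorial)) := by ring
      _ = 4^(m+1) * ((m+1).factorial * (m+1).factorial) := by rw [Nat.factorial_succ]

lemma K_le (m : ℕ) : K m ≤ 2^m * m.factorial := by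
  have h := fact2_le m
  rw [fact_eq] at h
  have h2 : 2^m * m.factorial * K m ≤ 2^m * m.factorial * (2^m * m.factorial) := by
    calc 2^m * m.factorial * K m ≤ 4^m * (m.factorial * m.factorial) := h
    _ = 2^m * m.factorial * (2^m * m.factorial) := by
        rw [show (4:ℕ) = 2*2 by rfl, mul_pow]; ring
  exact Nat.le_of_mul_le_mul_left h2 (by positivity)

lemma even_pow_sum (x a : ℝ) (m : ℕ) :
    (x + a)^(2*m) + (x - a)^(2*m)
      = 2 * ∑ i ∈ range (m+1), x^(2*i) * a^(2*(m-i)) * (Nat.choose (2*m) (2*i) : ℝ) := by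
  rw [sub_eq_add_neg, add_pow, add_pow, ← Finset.sum_add_distrib]
  have h1 : ∀ j ∈ range (2*m+1),
      x^j * a^(2*m-j) * (Nat.choose (2*m) j : ℝ) + x^j * (-a)^(2*m-j) * (Nat.choose (2*m) j : ℝ)
      = if Even j then 2 * (x^j * a^(2*m-j) * (Nat.choose (2*m) j : ℝ)) else 0 := by
    intro j hj
    rw [Finset.mem_range] at hj
    by_cases hev : Even j
    · have h2 : Even (2*m - j) := (Nat.even_sub (by omega)).2 (by simp [hev, Nat.even_mul])
      rw [h2.neg_pow, if_pos hev]; ring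
    · have h2 : ¬ Even (2*m - j) := by
        rw [Nat.even_sub (by omega)]; simp [hev, Nat.even_mul]
      rw [(Nat.not_even_iff_odd.1 h2).neg_pow, if_neg hev]; ring
  rw [Finset.sum_congr rfl h1, ← Finset.sum_filter]
  rw [Finset.mul_sum]
  refine Finset.sum_nbij' (fun j => j / 2) (fun i => 2 * i) ?_ ?_ ?_ ?_ ?_
  · intro j hj
    simp only [Finset.mem_filter, Finset.mem_range] at hj ⊢
    obtain ⟨hj1, k, hk⟩ := hj
    omega
  · intro i hi
    simp only [Finset.mem_filter, Finset.mem_range] at hi ⊢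
    exact ⟨by omega, ⟨i, by omega⟩⟩
  · intro j hj
    simp only [Finset.mem_filter, Finset.mem_range] at hj
    obtain ⟨hj1, k, hk⟩ := hj
    omega
  · intro i hi; omega
  · intro j hj
    simp only [Finset.mem_filter, Finset.mem_range] at hj
    obtain ⟨hj1, k, hk⟩ := hj
    have e1 : 2 * (j / 2) = j := by omega
    rw [e1]
    have e2 : 2 * (m - j/2) = 2*m - j := by omega
    rw [e2]

/-- the sign of the k-th Rademacher function on the j-th dyadic interval of level n -/

lemma sum_range_two_mul {M : Type*} [AddCommMonoid M] (N : ℕ) (F : ℕ → M) :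
    ∑ j ∈ range (2*N), F j = ∑ j ∈ range N, (F (2*j) + F (2*j+1)) := by
  induction N with
  | zero => simp
  | succ N ih =>
    have h : 2*(N+1) = (2*N)+1+1 := by omega
    rw [h, Finset.sum_range_succ, Finset.sum_range_succ, ih, Finset.sum_range_succ, add_assoc]

lemma sg_high (n j k b : ℕ) (hk : k < n) (hb : b < 2) :
    sg (n+1) (2*j+b) k = sg n j k := by
  unfold sg
  have h : (n+1)-1-k = (n-1-k)+1 := by omega
  rw [h]
  have h2 : (2*j+b)/2 = j := by omega
  rw [show ((n-1-k)+1) = Nat.succ (n-1-k) from rfl, Nat.testBit_succ, h2]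

lemma sg_last0 (n j : ℕ) : sg (n+1) (2*j) n = 1 := by
  unfold sg
  have h : (n+1)-1-n = 0 := by omega
  rw [h]
  simp [Nat.testBit_eq_decide_div_mod_eq, Nat.mul_mod_right]

lemma sg_last1 (n j : ℕ) : sg (n+1) (2*j+1) n = -1 := by
  unfold sg
  have h : (n+1)-1-n = 0 := by omega
  rw [h]
  have : (2*j+1) % 2 = 1 := by omega
  simp [Nat.testBit_eq_decide_div_mod_eq, this]

lemma moment_real (a : ℕ → ℝ) : ∀ (n m : ℕ),
    ∑ j ∈ range (2^n), (∑ k ∈ range n, a k * sg n j k)^(2*m)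
      ≤ 2^n * ((K m : ℝ) * (∑ k ∈ range n, (a k)^2)^m) := by
  intro n
  induction n with
  | zero =>
    intro m
    cases m with
    | zero => simp [K]
    | succ m =>
      simp only [pow_zero, Finset.range_one, Finset.sum_singleton, Finset.range_zero,
        Finset.sum_empty]
      rw [zero_pow (by omega), zero_pow (by omega)]
      positivity
  | succ n ih =>
    intro m
    set s : ℝ := ∑ k ∈ range n, (a k)^2 with hs
    have hs0 : 0 ≤ s := Finset.sum_nonneg (fun k _ => sq_nonneg _)
    set u : ℕ → ℝ := fun j => ∑ k ∈ range n, a k * sg n j k with hu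
    have h2p : (2^(n+1) : ℕ) = 2*2^n := by ring
    rw [h2p, sum_range_two_mul]
    have hsum : ∀ j ∈ range (2^n),
        (∑ k ∈ range (n+1), a k * sg (n+1) (2*j) k)^(2*m)
          + (∑ k ∈ range (n+1), a k * sg (n+1) (2*j+1) k)^(2*m)
        = 2 * ∑ i ∈ range (m+1), (u j)^(2*i) * (a n)^(2*(m-i)) * (Nat.choose (2*m) (2*i) : ℝ) := by
      intro j hj
      have e0 : ∑ k ∈ range (n+1), a k * sg (n+1) (2*j) k = u j + a n := by
        rw [Finset.sum_range_succ, sg_last0, mul_one]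
        congr 1
        refine Finset.sum_congr rfl (fun k hk => ?_)
        have h : sg (n+1) (2*j) k = sg n j k := by
          simpa using sg_high n j k 0 (Finset.mem_range.1 hk) (by omega)
        rw [h]
      have e1 : ∑ k ∈ range (n+1), a k * sg (n+1) (2*j+1) k = u j - a n := by
        rw [Finset.sum_range_succ, sg_last1, sub_eq_add_neg, mul_neg, mul_one]
        congr 1
        exact Finset.sum_congr rfl (fun k hk => by
          rw [sg_high n j k 1 (Finset.mem_range.1 hk) (by omega)])
      rw [e0, e1, even_pow_sum]
    rw [Finset.sum_congr rfl hsum, ← Finset.mul_sum, Finset.sum_comm]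
    have hterm : ∀ i ∈ range (m+1),
        ∑ j ∈ range (2^n), (u j)^(2*i) * (a n)^(2*(m-i)) * (Nat.choose (2*m) (2*i) : ℝ)
          ≤ 2^n * ((K m : ℝ) * (Nat.choose m i : ℝ) * (s^i * ((a n)^2)^(m-i))) := by
      intro i hi
      have him : i ≤ m := by have := Finset.mem_range.1 hi; omega
      have hkeyN : Nat.choose (2*m) (2*i) * K i ≤ K m * Nat.choose m i := by
        have h := key i (m - i)
        have e : i + (m - i) = m := by omega
        rw [e] at h
        rwa [show 2*(m-i) = 2*m - 2*i by omega, Nat.choose_symm (by omega),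
          Nat.choose_symm him] at h
      have hkeyR : (Nat.choose (2*m) (2*i) : ℝ) * (K i : ℝ) ≤ (K m : ℝ) * (Nat.choose m i : ℝ) := by
        exact_mod_cast hkeyN
      calc ∑ j ∈ range (2^n), (u j)^(2*i) * (a n)^(2*(m-i)) * (Nat.choose (2*m) (2*i) : ℝ)
          = (∑ j ∈ range (2^n), (u j)^(2*i)) * ((a n)^(2*(m-i)) * (Nat.choose (2*m) (2*i) : ℝ)) := by
            rw [Finset.sum_mul]
            exact Finset.sum_congr rfl (fun j _ => by ring)
        _ ≤ (2^n * ((K i : ℝ) * s^i)) * ((a n)^(2*(m-i)) * (Nat.choose (2*m) (2*i) : ℝ)) := by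
            refine mul_le_mul_of_nonneg_right (ih i) ?_
            have : (a n)^(2*(m-i)) = ((a n)^2)^(m-i) := by rw [← pow_mul]
            rw [this]; positivity
        _ = (2^n * s^i * (a n)^(2*(m-i))) * ((Nat.choose (2*m) (2*i) : ℝ) * (K i : ℝ)) := by ring
        _ ≤ (2^n * s^i * (a n)^(2*(m-i))) * ((K m : ℝ) * (Nat.choose m i : ℝ)) := by
            refine mul_le_mul_of_nonneg_left hkeyR ?_
            have : (a n)^(2*(m-i)) = ((a n)^2)^(m-i) := by rw [← pow_mul]
            rw [this]; positivity
        _ = 2^n * ((K m : ℝ) * (Nat.choose m i : ℝ) * (s^i * ((a n)^2)^(m-i))) := by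
            rw [← pow_mul]; ring
    calc 2 * ∑ i ∈ range (m+1), ∑ j ∈ range (2^n),
            (u j)^(2*i) * (a n)^(2*(m-i)) * (Nat.choose (2*m) (2*i) : ℝ)
        ≤ 2 * ∑ i ∈ range (m+1),
            2^n * ((K m : ℝ) * (Nat.choose m i : ℝ) * (s^i * ((a n)^2)^(m-i))) := by
          exact mul_le_mul_of_nonneg_left (Finset.sum_le_sum hterm) (by norm_num)
      _ = 2 * 2^n * ((K m : ℝ) * ∑ i ∈ range (m+1), s^i * ((a n)^2)^(m-i) * (Nat.choose m i : ℝ)) := by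
          rw [Finset.mul_sum, Finset.mul_sum]
          rw [Finset.mul_sum]
          exact Finset.sum_congr rfl (fun i _ => by ring)
      _ = 2 * 2^n * ((K m : ℝ) * (s + (a n)^2)^m) := by rw [add_pow]
      _ = 2^(n+1) * ((K m : ℝ) * (∑ k ∈ range (n+1), (a k)^2)^m) := by
          rw [Finset.sum_range_succ, pow_succ, ← hs]; ring

lemma two_pow_max (A B : ℝ) (hA : 0 ≤ A) (hB : 0 ≤ B) (m : ℕ) :
    (A + B)^m ≤ 2^m * (A^m + B^m) := by
  calc (A + B)^m ≤ (2 * max A B)^m := by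
        refine pow_le_pow_left₀ (by positivity) ?_ m
        rcases le_total A B with h | h
        · rw [max_eq_right h]; linarith
        · rw [max_eq_left h]; linarith
    _ = 2^m * (max A B)^m := by rw [mul_pow]
    _ ≤ 2^m * (A^m + B^m) := by
        refine mul_le_mul_of_nonneg_left ?_ (by positivity)
        rcases le_total A B with h | h
        · rw [max_eq_right h]; nlinarith [pow_nonneg hA m]
        · rw [max_eq_left h]; nlinarith [pow_nonneg hB m]

lemma cmoment (c : ℕ → ℂ) (hc : Summable fun k => ‖c k‖ ^ 2) (n m : ℕ) (hm : 1 ≤ m) :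
    ∑ j ∈ range (2^n), ‖Zd c n j‖^(2*m)
      ≤ 2^n * ((4 * Real.exp 1)^m * (m.factorial : ℝ) * (∑' k, ‖c k‖^2)^m) := by
  set g : ℝ := ∑' k, ‖c k‖^2 with hg
  have hg0 : 0 ≤ g := tsum_nonneg (fun k => by positivity)
  -- real and imaginary parts
  have hre : ∀ j, (Zd c n j).re = ∑ k ∈ range n, (c k).re * sg n j k := by
    intro j
    rw [Zd, Complex.re_sum]
    exact Finset.sum_congr rfl (fun k _ => by simp [Complex.mul_re])
  have him : ∀ j, (Zd c n j).im = ∑ k ∈ range n, (c k).im * sg n j k := by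
    intro j
    rw [Zd, Complex.im_sum]
    exact Finset.sum_congr rfl (fun k _ => by simp [Complex.mul_im])
  have hsre : ∑ k ∈ range n, ((c k).re)^2 ≤ g := by
    refine le_trans (Finset.sum_le_sum (fun k _ => ?_)) (Summable.sum_le_tsum _ (fun k _ => by positivity) hc)
    have := Complex.abs_re_le_norm (c k)
    have h2 : ((c k).re)^2 ≤ ‖c k‖^2 := by
      rw [← sq_abs ((c k).re)]
      exact pow_le_pow_left₀ (abs_nonneg _) this 2
    simpa using h2
  have hsim : ∑ k ∈ range n, ((c k).im)^2 ≤ g := by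
    refine le_trans (Finset.sum_le_sum (fun k _ => ?_)) (Summable.sum_le_tsum _ (fun k _ => by positivity) hc)
    have := Complex.abs_im_le_norm (c k)
    have h2 : ((c k).im)^2 ≤ ‖c k‖^2 := by
      rw [← sq_abs ((c k).im)]
      exact pow_le_pow_left₀ (abs_nonneg _) this 2
    simpa using h2
  have hRe := moment_real (fun k => (c k).re) n m
  have hIm := moment_real (fun k => (c k).im) n m
  have hRe' : ∑ j ∈ range (2^n), ((Zd c n j).re)^(2*m) ≤ 2^n * ((K m : ℝ) * g^m) := by
    refine le_trans ?_ (le_trans hRe ?_)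
    · exact le_of_eq (Finset.sum_congr rfl (fun j _ => by rw [hre j]))
    · refine mul_le_mul_of_nonneg_left (mul_le_mul_of_nonneg_left ?_ (by positivity)) (by positivity)
      exact pow_le_pow_left₀ (Finset.sum_nonneg fun k _ => sq_nonneg _) hsre m
  have hIm' : ∑ j ∈ range (2^n), ((Zd c n j).im)^(2*m) ≤ 2^n * ((K m : ℝ) * g^m) := by
    refine le_trans ?_ (le_trans hIm ?_)
    · exact le_of_eq (Finset.sum_congr rfl (fun j _ => by rw [him j]))
    · refine mul_le_mul_of_nonneg_left (mul_le_mul_of_nonneg_left ?_ (by positivity)) (by positivity)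
      exact pow_le_pow_left₀ (Finset.sum_nonneg fun k _ => sq_nonneg _) hsim m
  have hnorm : ∀ j, ‖Zd c n j‖^(2*m) ≤ 2^m * (((Zd c n j).re)^(2*m) + ((Zd c n j).im)^(2*m)) := by
    intro j
    have h1 : ‖Zd c n j‖^(2*m) = (((Zd c n j).re)^2 + ((Zd c n j).im)^2)^m := by
      rw [pow_mul, Complex.sq_norm, Complex.normSq_apply]
      ring_nf
    rw [h1]
    calc (((Zd c n j).re)^2 + ((Zd c n j).im)^2)^m
        ≤ 2^m * ((((Zd c n j).re)^2)^m + (((Zd c n j).im)^2)^m) :=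
          two_pow_max _ _ (sq_nonneg _) (sq_nonneg _) m
      _ = 2^m * (((Zd c n j).re)^(2*m) + ((Zd c n j).im)^(2*m)) := by
          rw [← pow_mul, ← pow_mul]
  calc ∑ j ∈ range (2^n), ‖Zd c n j‖^(2*m)
      ≤ ∑ j ∈ range (2^n), 2^m * (((Zd c n j).re)^(2*m) + ((Zd c n j).im)^(2*m)) :=
        Finset.sum_le_sum (fun j _ => hnorm j)
    _ = 2^m * ((∑ j ∈ range (2^n), ((Zd c n j).re)^(2*m)) + ∑ j ∈ range (2^n), ((Zd c n j).im)^(2*m)) := by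
        rw [← Finset.mul_sum, Finset.sum_add_distrib]
    _ ≤ 2^m * (2^n * ((K m : ℝ) * g^m) + 2^n * ((K m : ℝ) * g^m)) := by
        refine mul_le_mul_of_nonneg_left (add_le_add hRe' hIm') (by positivity)
    _ = 2^n * (2 * 2^m * (K m : ℝ) * g^m) := by ring
    _ ≤ 2^n * ((4 * Real.exp 1)^m * (m.factorial : ℝ) * g^m) := by
        refine mul_le_mul_of_nonneg_left ?_ (by positivity)
        refine mul_le_mul_of_nonneg_right ?_ (by positivity)
        have hK : (K m : ℝ) ≤ 2^m * (m.factorial : ℝ) := by exact_mod_cast K_le m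
        have he2 : (2:ℝ) ≤ Real.exp 1 := by
          have := Real.add_one_le_exp 1; linarith
        calc 2 * 2^m * (K m : ℝ) ≤ 2 * 2^m * (2^m * (m.factorial : ℝ)) := by
              refine mul_le_mul_of_nonneg_left hK (by positivity)
          _ = 2 * 4^m * (m.factorial : ℝ) := by
              rw [show (4:ℝ) = 2*2 by norm_num, mul_pow]; ring
          _ ≤ (Real.exp 1)^m * 4^m * (m.factorial : ℝ) := by
              refine mul_le_mul_of_nonneg_right (mul_le_mul_of_nonneg_right ?_ (by positivity)) (by positivity)
              calc (2:ℝ) = 2^1 := by norm_num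
                _ ≤ 2^m := by exact pow_le_pow_right₀ (by norm_num) hm
                _ ≤ (Real.exp 1)^m := pow_le_pow_left₀ (by norm_num) he2 m
          _ = (4 * Real.exp 1)^m * (m.factorial : ℝ) := by rw [mul_pow]; ring

lemma exp_tsum (x : ℝ) : Real.exp x = ∑' m : ℕ, x^m / (m.factorial : ℝ) := by
  rw [Real.exp_eq_exp_ℝ, NormedSpace.exp_eq_tsum ℝ]
  exact tsum_congr (fun m => by rw [smul_eq_mul]; ring)

lemma disc (c : ℕ → ℂ) (hc : Summable fun k => ‖c k‖ ^ 2) (μ : ℝ) (hμ : 0 < μ)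
    (hsmall : 4 * Real.exp 1 * μ * (∑' k, ‖c k‖ ^ 2) < 1) (n : ℕ) :
    (2^n : ℝ)⁻¹ * ∑ j ∈ range (2^n), Real.exp (μ * ‖Zd c n j‖^2)
      ≤ (1 - 4 * Real.exp 1 * μ * ∑' k, ‖c k‖ ^ 2)⁻¹ := by
  set g : ℝ := ∑' k, ‖c k‖^2 with hg
  have hg0 : 0 ≤ g := tsum_nonneg (fun k => by positivity)
  set q : ℝ := 4 * Real.exp 1 * μ * g with hq
  have hq0 : 0 ≤ q := by positivity
  have hq1 : q < 1 := hsmall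
  -- termwise quantity
  set t : ℕ → ℝ := fun m => (2^n : ℝ)⁻¹ * ∑ j ∈ range (2^n), (μ * ‖Zd c n j‖^2)^m / (m.factorial : ℝ) with ht
  have hterm : ∀ m, t m ≤ q^m := by
    intro m
    cases m with
    | zero => simp [ht]
    | succ m =>
      have hmom := cmoment c hc n (m+1) (by omega)
      have h1 : ∀ j, (μ * ‖Zd c n j‖^2)^(m+1) = μ^(m+1) * ‖Zd c n j‖^(2*(m+1)) := by
        intro j; rw [mul_pow, ← pow_mul]
      calc t (m+1) = (2^n : ℝ)⁻¹ * (μ^(m+1) / ((m+1).factorial : ℝ)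
            * ∑ j ∈ range (2^n), ‖Zd c n j‖^(2*(m+1))) := by
            have e : ∑ j ∈ range (2^n), (μ * ‖Zd c n j‖^2)^(m+1) / (((m+1).factorial) : ℝ)
                = μ^(m+1) / (((m+1).factorial) : ℝ) * ∑ j ∈ range (2^n), ‖Zd c n j‖^(2*(m+1)) := by
              rw [Finset.mul_sum]
              exact Finset.sum_congr rfl (fun j _ => by rw [h1 j]; ring)
            simp only [ht]
            rw [e]
        _ ≤ (2^n : ℝ)⁻¹ * (μ^(m+1) / ((m+1).factorial : ℝ)
            * (2^n * ((4 * Real.exp 1)^(m+1) * (((m+1).factorial : ℝ)) * g^(m+1)))) := by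
            refine mul_le_mul_of_nonneg_left (mul_le_mul_of_nonneg_left hmom (by positivity)) (by positivity)
        _ = q^(m+1) := by
            rw [hq]
            have hfac : ((m+1).factorial : ℝ) ≠ 0 := by positivity
            field_simp
            ring
  have hsumq : Summable (fun m : ℕ => q^m) := summable_geometric_of_lt_one hq0 hq1
  have ht0 : ∀ m, 0 ≤ t m := by
    intro m
    refine mul_nonneg (by positivity) (Finset.sum_nonneg (fun j _ => by positivity))
  have hsumt : Summable t := by
    refine Summable.of_nonneg_of_le ht0 hterm hsumq
  have hexp : ∀ j, Real.exp (μ * ‖Zd c n j‖^2) = ∑' m : ℕ, (μ * ‖Zd c n j‖^2)^m / (m.factorial : ℝ) :=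
    fun j => exp_tsum _
  have hswap : ∑ j ∈ range (2^n), Real.exp (μ * ‖Zd c n j‖^2)
      = ∑' m : ℕ, ∑ j ∈ range (2^n), (μ * ‖Zd c n j‖^2)^m / (m.factorial : ℝ) := by
    rw [Finset.sum_congr rfl (fun j _ => hexp j)]
    exact (Summable.tsum_finsetSum (fun j _ => Real.summable_pow_div_factorial _)).symm
  calc (2^n : ℝ)⁻¹ * ∑ j ∈ range (2^n), Real.exp (μ * ‖Zd c n j‖^2)
      = ∑' m : ℕ, t m := by rw [hswap, ← tsum_mul_left]
    _ ≤ ∑' m : ℕ, q^m := Summable.tsum_le_tsum hterm hsumt hsumq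
    _ = (1 - q)⁻¹ := tsum_geometric_of_lt_one hq0 hq1

lemma testBit_iff (j e : ℕ) : Nat.testBit j e = true ↔ 2^e ≤ j % (2^e * 2) := by
  rw [Nat.testBit_eq_decide_div_mod_eq]
  have h1 : j / 2^e % 2 = j % (2^e * 2) / 2^e := (Nat.mod_mul_right_div_self j (2^e) 2).symm
  rw [h1]
  have h2 : j % (2^e * 2) < 2^e * 2 := Nat.mod_lt _ (by positivity)
  have h3 : 0 < 2^e := by positivity
  constructor
  · intro h
    simp only [decide_eq_true_eq] at h
    by_contra hc
    push_neg at hc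
    rw [Nat.div_eq_of_lt hc] at h
    omega
  · intro h
    simp only [decide_eq_true_eq]
    have := Nat.div_le_div_right (c := 2^e) h2.le
    have h4 : 1 ≤ j % (2^e * 2) / 2^e := (Nat.one_le_div_iff h3).2 h
    have h5 : j % (2^e * 2) / 2^e < 2 := Nat.div_lt_of_lt_mul (by omega)
    omega

lemma rad_on (n j k : ℕ) (hk : k < n) (x : ℝ)
    (hx1 : (j:ℝ)/2^n < x) (hx2 : x < ((j:ℝ)+1)/2^n) :
    rademacher k x = sg n j k := by
  set d : ℕ := n - k with hd
  have hd1 : 1 ≤ d := by omega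
  have hnkd : n = k + d := by omega
  set e : ℕ := d - 1 with he
  have hde : d = e + 1 := by omega
  set q : ℕ := j / 2^d with hqdef
  set s : ℕ := j % 2^d with hsdef
  have hjqs : 2^d * q + s = j := Nat.div_add_mod j (2^d)
  have hs_lt : s < 2^d := Nat.mod_lt _ (by positivity)
  -- real inequalities
  have h2d : (0:ℝ) < 2^d := by positivity
  have h2k : (0:ℝ) < 2^k := by positivity
  have h2n : ((2:ℝ))^n = 2^k * 2^d := by rw [hnkd, pow_add]
  have hjr : (j:ℝ) = 2^d * q + s := by exact_mod_cast congrArg (Nat.cast : ℕ → ℝ) hjqs.symm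
  set z : ℝ := 2^k * x - q with hz
  have hz1 : (s:ℝ)/2^d < z := by
    rw [hz]
    have : (j:ℝ)/2^n * 2^k < x * 2^k := by
      exact mul_lt_mul_of_pos_right hx1 h2k
    have he1 : (j:ℝ)/2^n * 2^k = q + s/2^d := by
      rw [h2n, hjr]; field_simp
    nlinarith
  have hz2 : z < ((s:ℝ)+1)/2^d := by
    rw [hz]
    have : x * 2^k < ((j:ℝ)+1)/2^n * 2^k := mul_lt_mul_of_pos_right hx2 h2k
    have he1 : ((j:ℝ)+1)/2^n * 2^k = q + ((s:ℝ)+1)/2^d := by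
      rw [h2n, hjr]; field_simp; ring
    nlinarith
  -- reduce the sine
  have hsin : Real.sin (2 * π * 2^k * x) = Real.sin (2 * π * z) := by
    have harg : 2 * π * 2^k * x = 2 * π * z + (q:ℤ) * (2 * π) := by
      rw [hz]; push_cast; ring
    rw [harg, Real.sin_add_int_mul_two_pi]
  have hsg : sg n j k = if Nat.testBit j e then -1 else 1 := by
    rw [sg, show n - 1 - k = e by omega]
  have hbit : Nat.testBit j e = true ↔ 2^e ≤ s := by
    rw [testBit_iff, hsdef, hde, pow_succ]
  have h2e : ((2:ℝ))^d = 2^e * 2 := by rw [hde, pow_succ]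
  rcases Nat.lt_or_ge s (2^e) with hcase | hcase
  · -- positive sign
    have hbit' : Nat.testBit j e = false := by
      rcases Bool.eq_false_or_eq_true (Nat.testBit j e) with h | h
      · exact absurd (hbit.1 h) (by omega)
      · exact h
    have hz0 : 0 < z := lt_of_le_of_lt (by positivity) hz1
    have hzhalf : z < 1/2 := by
      have hsr : ((s:ℝ)+1) ≤ 2^e := by exact_mod_cast hcase
      rw [h2e] at hz2
      have h2er : (0:ℝ) < 2^e := by positivity
      calc z < ((s:ℝ)+1)/(2^e * 2) := hz2
        _ ≤ (2^e : ℝ)/(2^e * 2) := by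
            apply div_le_div_of_nonneg_right hsr (by positivity) |>.trans_eq rfl
        _ = 1/2 := by field_simp
    have hpos : 0 < Real.sin (2 * π * z) := by
      apply Real.sin_pos_of_pos_of_lt_pi
      · positivity
      · nlinarith [Real.pi_pos]
    rw [rademacher, hsin, Real.sign_of_pos hpos, hsg, hbit']
    simp
  · -- negative sign
    have hbit' : Nat.testBit j e = true := hbit.2 hcase
    have hsr : (2:ℝ)^e ≤ s := by exact_mod_cast hcase
    have h2er : (0:ℝ) < 2^e := by positivity
    have hzl : 1/2 < z := by
      have : ((2:ℝ)^e)/(2^e*2) ≤ (s:ℝ)/2^d := by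
        rw [h2e]
        exact div_le_div_of_nonneg_right hsr (by positivity) |>.trans_eq rfl
      have h12 : ((2:ℝ)^e)/(2^e*2) = 1/2 := by field_simp
      linarith [hz1]
    have hzu : z < 1 := by
      have hsr2 : ((s:ℝ)+1) ≤ 2^d := by exact_mod_cast hs_lt
      calc z < ((s:ℝ)+1)/2^d := hz2
        _ ≤ (2^d:ℝ)/2^d := div_le_div_of_nonneg_right hsr2 (by positivity) |>.trans_eq rfl
        _ = 1 := by field_simp
    have hneg : Real.sin (2 * π * z) < 0 := by
      have h1 : 0 < Real.sin (2 * π * z - π) := by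
        apply Real.sin_pos_of_pos_of_lt_pi
        · nlinarith [Real.pi_pos]
        · nlinarith [Real.pi_pos]
      have h2 : Real.sin (2 * π * z - π) = - Real.sin (2 * π * z) := Real.sin_sub_pi _
      linarith
    rw [rademacher, hsin, Real.sign_of_neg hneg, hsg, hbit']
    simp

lemma int_eq (c : ℕ → ℂ) (n : ℕ) (φ : ℂ → ℝ) (hφ : Continuous φ) :
    ∫ x in (0:ℝ)..1, φ (∑ k ∈ range n, c k * rademacher k x)
      = (2^n : ℝ)⁻¹ * ∑ j ∈ range (2^n), φ (Zd c n j) := by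
  set a : ℕ → ℝ := fun j => (j:ℝ) / 2^n with ha
  have h2n : (0:ℝ) < 2^n := by positivity
  have hlt : ∀ j : ℕ, a j < a (j+1) := by
    intro j
    rw [ha]
    refine (div_lt_div_iff_of_pos_right h2n).2 ?_
    push_cast; linarith
  -- on each open dyadic interval the integrand is the constant φ (Zd c n j)
  have hconst : ∀ j, j < 2^n → ∀ x ∈ Set.Ioo (a j) (a (j+1)),
      φ (∑ k ∈ range n, c k * rademacher k x) = φ (Zd c n j) := by
    intro j hj x hx
    congr 1
    rw [Zd]
    refine Finset.sum_congr rfl (fun k hk => ?_)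
    rw [rad_on n j k (Finset.mem_range.1 hk) x ?_ ?_]
    · exact hx.1
    · have : ((j:ℝ)+1) = ((j+1 : ℕ) : ℝ) := by push_cast; ring
      rw [this]; exact hx.2
  have hae : ∀ j, j < 2^n → (∀ᵐ x ∂(volume : Measure ℝ), x ∈ Set.uIoc (a j) (a (j+1)) →
      φ (∑ k ∈ range n, c k * rademacher k x) = φ (Zd c n j)) := by
    intro j hj
    rw [ae_iff]
    refine measure_mono_null ?_ (measure_singleton (a (j+1)))
    intro x hx
    simp only [Set.mem_setOf_eq, not_forall] at hx
    obtain ⟨hx1, hx2⟩ := hx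
    rw [Set.uIoc_of_le (hlt j).le] at hx1
    simp only [Set.mem_singleton_iff]
    by_contra hne
    exact hx2 (hconst j hj x ⟨hx1.1, lt_of_le_of_ne hx1.2 hne⟩)
  have hint : ∀ j, j < 2^n → IntervalIntegrable
      (fun x => φ (∑ k ∈ range n, c k * rademacher k x)) volume (a j) (a (j+1)) := by
    intro j hj
    rw [intervalIntegrable_iff]
    have hconst' : IntegrableOn (fun _ => φ (Zd c n j)) (Set.uIoc (a j) (a (j+1))) volume := by
      refine integrableOn_const ?_
      rw [Set.uIoc_of_le (hlt j).le]
      exact measure_Ioc_lt_top.ne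
    refine hconst'.congr ?_
    refine ((ae_restrict_iff' measurableSet_uIoc).2 ?_)
    filter_upwards [hae j hj] with x hx hmem
    exact (hx hmem).symm
  have hval : ∀ j, j < 2^n →
      ∫ x in (a j)..(a (j+1)), φ (∑ k ∈ range n, c k * rademacher k x)
        = (2^n : ℝ)⁻¹ * φ (Zd c n j) := by
    intro j hj
    rw [intervalIntegral.integral_congr_ae (hae j hj), intervalIntegral.integral_const]
    have : a (j+1) - a j = (2^n : ℝ)⁻¹ := by
      rw [ha]; simp only []; push_cast; field_simp; ring
    rw [this, smul_eq_mul]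
  have hsum := intervalIntegral.sum_integral_adjacent_intervals
    (f := fun x => φ (∑ k ∈ range n, c k * rademacher k x)) (μ := volume) (a := a) (n := 2^n)
    (fun k hk => hint k hk)
  have ha0 : a 0 = 0 := by rw [ha]; simp
  have han : a (2^n) = 1 := by
    rw [ha]; simp only []; push_cast; field_simp
  rw [ha0, han] at hsum
  rw [← hsum, Finset.sum_congr rfl (fun j hj => hval j (Finset.mem_range.1 hj)), ← Finset.mul_sum]

lemma abs_sign_le (t : ℝ) : |Real.sign t| ≤ 1 := by
  rcases lt_trichotomy t 0 with h|h|h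
  · rw [Real.sign_of_neg h]; norm_num
  · rw [h, Real.sign_zero]; norm_num
  · rw [Real.sign_of_pos h]; norm_num

lemma meas_rad (k : ℕ) : Measurable (rademacher k) := by
  have hsign : Measurable Real.sign := by
    have h : Real.sign = fun r : ℝ => if r < 0 then (-1:ℝ) else if 0 < r then 1 else 0 := by
      funext r; rfl
    rw [h]
    exact Measurable.ite measurableSet_Iio measurable_const
      (Measurable.ite measurableSet_Ioi measurable_const measurable_const)
  exact hsign.comp (Real.continuous_sin.measurable.comp (measurable_id.const_mul _))

theorem stmt_9 (c : ℕ → ℂ) (hc : Summable fun k => ‖c k‖ ^ 2)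
    (f : ℝ → ℂ) (hf : ∀ x : ℝ, f x = ∑' k, c k * rademacher k x)
    (μ : ℝ) (hμ : 0 < μ)
    (hsmall : 4 * Real.exp 1 * μ * (∑' k, ‖c k‖ ^ 2) < 1) :
    ∫ x in (0 : ℝ)..1, Real.exp (μ * ‖f x‖ ^ 2)
      ≤ 1 / (1 - 4 * Real.exp 1 * μ * ∑' k, ‖c k‖ ^ 2) := by
  set g : ℝ := ∑' k, ‖c k‖^2 with hg
  have hg0 : 0 ≤ g := tsum_nonneg (fun k => by positivity)
  have h1q : 0 < 1 - 4 * Real.exp 1 * μ * g := by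
    have := hsmall; linarith
  rw [one_div]
  by_cases hl1 : Summable (fun k => ‖c k‖)
  · -- ℓ¹ case
    set A : ℝ := ∑' k, ‖c k‖ with hA
    have hA0 : 0 ≤ A := tsum_nonneg (fun k => norm_nonneg _)
    set S : ℕ → ℝ → ℂ := fun n x => ∑ k ∈ range n, c k * rademacher k x with hSdef
    have hnt : ∀ k x, ‖c k * (rademacher k x : ℂ)‖ ≤ ‖c k‖ := by
      intro k x
      rw [norm_mul, Complex.norm_real]
      calc ‖c k‖ * |rademacher k x| ≤ ‖c k‖ * 1 :=
        mul_le_mul_of_nonneg_left (abs_sign_le _) (norm_nonneg _)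
      _ = ‖c k‖ := mul_one _
    have hsx : ∀ x, Summable (fun k => c k * (rademacher k x : ℂ)) := by
      intro x
      exact Summable.of_norm_bounded hl1 (fun k => hnt k x)
    have hfS : ∀ x, Filter.Tendsto (fun n => S n x) Filter.atTop (nhds (f x)) := by
      intro x
      rw [hf x]
      exact (hsx x).hasSum.tendsto_sum_nat
    have hSA : ∀ n x, ‖S n x‖ ≤ A := by
      intro n x
      calc ‖S n x‖ ≤ ∑ k ∈ range n, ‖c k * (rademacher k x : ℂ)‖ := norm_sum_le _ _
        _ ≤ ∑ k ∈ range n, ‖c k‖ := Finset.sum_le_sum (fun k _ => hnt k x)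
        _ ≤ A := Summable.sum_le_tsum _ (fun k _ => norm_nonneg _) hl1
    have hfA : ∀ x, ‖f x‖ ≤ A := by
      intro x
      rw [hf x]
      have h1 : Summable (fun k => ‖c k * (rademacher k x : ℂ)‖) :=
        Summable.of_nonneg_of_le (fun k => norm_nonneg _) (fun k => hnt k x) hl1
      calc ‖∑' k, c k * (rademacher k x : ℂ)‖ ≤ ∑' k, ‖c k * (rademacher k x : ℂ)‖ :=
          norm_tsum_le_tsum_norm h1
        _ ≤ ∑' k, ‖c k‖ := Summable.tsum_le_tsum (fun k => hnt k x) h1 hl1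
    set Φ : ℂ → ℝ := fun z => Real.exp (μ * ‖z‖^2) with hΦdef
    have hΦ : Continuous Φ := by
      apply Real.continuous_exp.comp
      exact continuous_const.mul (continuous_norm.pow 2)
    have hSmeas : ∀ n, Measurable (S n) := by
      intro n
      apply Finset.measurable_sum
      intro k _
      exact measurable_const.mul (Complex.measurable_ofReal.comp (meas_rad k))
    have hfmeas : Measurable f :=
      measurable_of_tendsto_metrizable hSmeas (tendsto_pi_nhds.2 hfS)
    have hbd : ∀ n, ∀ᵐ x ∂(volume.restrict (Set.Ioc (0:ℝ) 1)),
        ‖Φ (S n x)‖ ≤ Real.exp (μ * A^2) := by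
      intro n
      refine Filter.Eventually.of_forall (fun x => ?_)
      rw [hΦdef]
      simp only [Real.norm_eq_abs, Real.abs_exp]
      refine Real.exp_le_exp.2 (mul_le_mul_of_nonneg_left ?_ hμ.le)
      exact pow_le_pow_left₀ (norm_nonneg _) (hSA n x) 2
    have hconv : ∀ᵐ x ∂(volume.restrict (Set.Ioc (0:ℝ) 1)),
        Filter.Tendsto (fun n => Φ (S n x)) Filter.atTop (nhds (Φ (f x))) := by
      refine Filter.Eventually.of_forall (fun x => ?_)
      exact (hΦ.tendsto (f x)).comp (hfS x)
    have hintbd : Integrable (fun _ : ℝ => Real.exp (μ * A^2))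
        (volume.restrict (Set.Ioc (0:ℝ) 1)) := by
      exact integrableOn_const measure_Ioc_lt_top.ne
    have hDCT := MeasureTheory.tendsto_integral_of_dominated_convergence
      (μ := volume.restrict (Set.Ioc (0:ℝ) 1)) (F := fun n x => Φ (S n x))
      (f := fun x => Φ (f x)) (fun _ => Real.exp (μ * A^2))
      (fun n => (hΦ.measurable.comp (hSmeas n)).aestronglyMeasurable)
      hintbd hbd hconv
    have hbound : ∀ n, ∫ x in Set.Ioc (0:ℝ) 1, Φ (S n x)
        ≤ (1 - 4 * Real.exp 1 * μ * g)⁻¹ := by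
      intro n
      rw [← intervalIntegral.integral_of_le zero_le_one]
      have := int_eq c n Φ hΦ
      rw [hSdef]
      simp only []
      rw [this]
      exact disc c hc μ hμ hsmall n
    have hfinal : ∫ x in Set.Ioc (0:ℝ) 1, Φ (f x) ≤ (1 - 4 * Real.exp 1 * μ * g)⁻¹ :=
      le_of_tendsto' hDCT hbound
    rw [intervalIntegral.integral_of_le zero_le_one]
    exact hfinal
  · -- non-ℓ¹ case : f vanishes outside a countable set
    set D : Set ℝ := ⋃ k : ℕ, {x | Real.sin (2 * π * 2^k * x) = 0} with hD
    have hDc : D.Countable := by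
      refine Set.countable_iUnion (fun k => ?_)
      have hsub : {x : ℝ | Real.sin (2 * π * 2^k * x) = 0}
          ⊆ Set.range (fun m : ℤ => (m:ℝ) / (2 * 2^k)) := by
        intro x hx
        rw [Set.mem_setOf_eq, Real.sin_eq_zero_iff] at hx
        obtain ⟨m, hm⟩ := hx
        refine ⟨m, ?_⟩
        have hπ : (0:ℝ) < π := Real.pi_pos
        have h2k : (0:ℝ) < 2^k := by positivity
        field_simp
        nlinarith [hm]
      exact Set.Countable.mono hsub (Set.countable_range _)
    have hx1 : ∀ x ∉ D, Real.exp (μ * ‖f x‖^2) = 1 := by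
      intro x hx
      have hsin : ∀ k : ℕ, Real.sin (2 * π * 2^k * x) ≠ 0 := by
        intro k hk
        exact hx (Set.mem_iUnion.2 ⟨k, hk⟩)
      have habs : ∀ k : ℕ, |rademacher k x| = 1 := by
        intro k
        rcases lt_or_gt_of_ne (hsin k) with h | h
        · rw [rademacher, Real.sign_of_neg h]; norm_num
        · rw [rademacher, Real.sign_of_pos h]; norm_num
      have hnotsum : ¬ Summable (fun k => c k * (rademacher k x : ℂ)) := by
        intro hs
        apply hl1
        have := summable_norm_iff.2 hs
        have heq : (fun k => ‖c k * (rademacher k x : ℂ)‖) = fun k => ‖c k‖ := by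
          funext k
          rw [norm_mul, Complex.norm_real, Real.norm_eq_abs, habs k, mul_one]
        rwa [heq] at this
      have hfx : f x = 0 := by
        rw [hf x]
        exact tsum_eq_zero_of_not_summable hnotsum
      rw [hfx]
      simp
    have hae : ∀ᵐ x ∂(volume : Measure ℝ), x ∈ Set.uIoc (0:ℝ) 1 →
        Real.exp (μ * ‖f x‖^2) = (1:ℝ) := by
      have hD0 : (volume : Measure ℝ) D = 0 := Set.Countable.measure_zero hDc _
      rw [ae_iff]
      refine measure_mono_null ?_ hD0
      intro x hx
      simp only [Set.mem_setOf_eq, not_forall] at hx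
      obtain ⟨_, hx2⟩ := hx
      by_contra hxD
      exact hx2 (hx1 x hxD)
    rw [intervalIntegral.integral_congr_ae hae, intervalIntegral.integral_const]
    simp only [smul_eq_mul, sub_zero, mul_one]
    calc (1:ℝ) = (1 - 4 * Real.exp 1 * μ * g) * (1 - 4 * Real.exp 1 * μ * g)⁻¹ :=
          (mul_inv_cancel₀ h1q.ne').symm
      _ ≤ 1 * (1 - 4 * Real.exp 1 * μ * g)⁻¹ := by
          have hq0 : 0 ≤ 4 * Real.exp 1 * μ * g := by positivity
          refine mul_le_mul_of_nonneg_right (by linarith) (by positivity)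
      _ = (1 - 4 * Real.exp 1 * μ * g)⁻¹ := one_mul _
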